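/- arXiv:1808.10674 — 4 statements merged into one kernel-verified Lean document; each statement's English description precedes it below -/
import Mathlib

section
/- Let A, B > 0, C a real number, and q > 1. If A ≤ B·A^{1/q} + C, then A ≤ B^{q/(q-1)} + (q/(q-1))·max(C, 0). -/
/-- Self-dominated inequality: if `A ≤ B·A^(1/q) + C` with `A, B > 0` and `q > 1`,
then `A ≤ B^(q/(q-1)) + (q/(q-1))·max C 0`. -/
theorem self_dominated_inequality (A B C q : ℝ) (hA : 0 < A) (hB : 0 < B) (hq : 1 < q)
    (h : A ≤ B * A ^ (1 / q) + C) :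
    A ≤ B ^ (q / (q - 1)) + (q / (q - 1)) * max C 0 := by
  set q' := q / (q - 1) with hq'
  have hcon : q.HolderConjugate q' := Real.HolderConjugate.conjExponent hq
  have hqpos : (0 : ℝ) < q := hcon.pos
  have hq'pos : (0 : ℝ) < q' := hcon.symm.pos
  have hy : A ^ (1 / q) * B ≤ (A ^ (1 / q)) ^ q / q + B ^ q' / q' :=
    Real.young_inequality_of_nonneg (Real.rpow_nonneg hA.le _) hB.le hcon
  have hAq : (A ^ (1 / q)) ^ q = A := by
    rw [← Real.rpow_mul hA.le, one_div_mul_cancel hqpos.ne', Real.rpow_one]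
  rw [hAq] at hy
  have h1 : A ≤ A / q + B ^ q' / q' + max C 0 := by
    calc A ≤ B * A ^ (1 / q) + C := h
    _ ≤ (A / q + B ^ q' / q') + max C 0 := by
        have := hy
        nlinarith [le_max_left C (0:ℝ)]
  have hsum : 1 / q + 1 / q' = 1 := by
    simpa [one_div] using hcon.inv_add_inv_eq_one
  have key : A * (1 / q') ≤ B ^ q' / q' + max C 0 := by
    have e : A * (1 / q') = A - A / q := by
      have e1 : 1 / q' = 1 - 1 / q := by linarith
      rw [e1]; ring
    linarith
  have := mul_le_mul_of_nonneg_left key hq'pos.le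
  calc A = q' * (A * (1 / q')) := by field_simp
  _ ≤ q' * (B ^ q' / q' + max C 0) := by exact mul_le_mul_of_nonneg_left key hq'pos.le
  _ = B ^ q' + q' * max C 0 := by field_simp
end

section
/- Let θ > 0 and define χ₂(δ) = Γ(δ)²·(θΓ(θ+1)/Γ(θ+2δ) − Γ(θ+1)²/Γ(θ+δ)²) for δ > 0. Then as δ → 0⁺, χ₂(δ) converges to (θ²/Γ(θ)²)·(Γ'(θ)² − Γ(θ)Γ''(θ)). -/
lemma gamma_analyticOnNhd : AnalyticOnNhd ℝ Real.Gamma (Set.Ioi 0) := by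
  have hU : IsOpen {s : ℂ | 0 < s.re} := isOpen_lt continuous_const Complex.continuous_re
  have hC : AnalyticOnNhd ℂ Complex.Gamma {s : ℂ | 0 < s.re} := by
    apply DifferentiableOn.analyticOnNhd ?_ hU
    intro s hs
    refine (Complex.differentiableAt_Gamma s fun m => ?_).differentiableWithinAt
    intro h
    rw [h] at hs
    simp only [Set.mem_setOf_eq, Complex.neg_re, Complex.natCast_re] at hs
    linarith [Nat.cast_nonneg (α := ℝ) m]
  intro x hx
  have h1 : AnalyticAt ℝ (fun y : ℝ => (Complex.Gamma y).re) x := by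
    apply (Complex.reCLM.analyticAt _).comp
    exact ((hC x (by simpa using hx)).restrictScalars).comp
      (Complex.ofRealCLM.analyticAt x)
  exact h1.congr (Filter.Eventually.of_forall fun y => by
    simp [Complex.Gamma_ofReal])

/-- For `θ > 0` and `χ₂(δ) = Γ(δ)²(θΓ(θ+1)/Γ(θ+2δ) − Γ(θ+1)²/Γ(θ+δ)²)`, as `δ → 0⁺`,
`χ₂(δ) → (θ²/Γ(θ)²)(Γ'(θ)² − Γ(θ)Γ''(θ))`. -/
theorem chi2_limit (θ : ℝ) (hθ : 0 < θ) :
    Filter.Tendsto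
      (fun δ : ℝ => Real.Gamma δ ^ 2 *
        (θ * Real.Gamma (θ + 1) / Real.Gamma (θ + 2 * δ)
          - Real.Gamma (θ + 1) ^ 2 / Real.Gamma (θ + δ) ^ 2))
      (nhdsWithin 0 (Set.Ioi 0))
      (nhds ((θ ^ 2 / Real.Gamma θ ^ 2) *
        (deriv Real.Gamma θ ^ 2 - Real.Gamma θ * deriv (deriv Real.Gamma) θ))) := by
  set G := Real.Gamma with hG
  set G1 := deriv Real.Gamma with hG1
  set G2 := deriv (deriv Real.Gamma) with hG2
  have hGpos : ∀ x : ℝ, 0 < x → 0 < G x := fun x hx => Real.Gamma_pos_of_pos hx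
  have hD : ∀ x : ℝ, 0 < x → HasDerivAt G (G1 x) x := fun x hx =>
    ((gamma_analyticOnNhd x hx).differentiableAt).hasDerivAt
  have hD1 : ∀ x : ℝ, 0 < x → HasDerivAt G1 (G2 x) x := fun x hx =>
    ((gamma_analyticOnNhd.deriv x hx).differentiableAt).hasDerivAt
  -- composed derivatives
  have hA : ∀ δ : ℝ, 0 < θ + δ → HasDerivAt (fun d : ℝ => G (θ + d)) (G1 (θ + δ)) δ := by
    intro δ h
    simpa [Function.comp_def] using (hD _ h).comp δ ((hasDerivAt_id δ).const_add θ)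
  have hB : ∀ δ : ℝ, 0 < θ + 2 * δ →
      HasDerivAt (fun d : ℝ => G (θ + 2 * d)) (G1 (θ + 2 * δ) * 2) δ := by
    intro δ h
    simpa [Function.comp_def] using (hD _ h).comp δ (((hasDerivAt_id δ).const_mul 2).const_add θ)
  have hA1 : ∀ δ : ℝ, 0 < θ + δ → HasDerivAt (fun d : ℝ => G1 (θ + d)) (G2 (θ + δ)) δ := by
    intro δ h
    simpa [Function.comp_def] using (hD1 _ h).comp δ ((hasDerivAt_id δ).const_add θ)
  have hB1 : ∀ δ : ℝ, 0 < θ + 2 * δ →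
      HasDerivAt (fun d : ℝ => G1 (θ + 2 * d)) (G2 (θ + 2 * δ) * 2) δ := by
    intro δ h
    simpa [Function.comp_def] using (hD1 _ h).comp δ (((hasDerivAt_id δ).const_mul 2).const_add θ)
  set f : ℝ → ℝ := fun δ => G (θ + δ) ^ 2 - G θ * G (θ + 2 * δ) with hf_def
  set f' : ℝ → ℝ := fun δ => 2 * G (θ + δ) * G1 (θ + δ) - 2 * G θ * G1 (θ + 2 * δ)
    with hf'_def
  have hf : ∀ δ : ℝ, 0 < θ + δ → 0 < θ + 2 * δ → HasDerivAt f (f' δ) δ := by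
    intro δ h1 h2
    have := (((hA δ h1).pow 2).sub ((hB δ h2).const_mul (G θ)))
    convert (show HasDerivAt f _ δ from this) using 1
    push_cast
    ring
  have hc : HasDerivAt f' (2 * (G1 θ ^ 2 - G θ * G2 θ)) 0 := by
    have h1 : (0:ℝ) < θ + 0 := by linarith
    have h2 : (0:ℝ) < θ + 2 * 0 := by linarith
    have hfun : f' = fun δ => 2 * (G (θ + δ) * G1 (θ + δ)) - (2 * G θ) * G1 (θ + 2 * δ) := by
      funext δ
      show 2 * G (θ + δ) * G1 (θ + δ) - 2 * G θ * G1 (θ + 2 * δ) = _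
      ring
    rw [hfun]
    have := ((((hA 0 h1).mul (hA1 0 h1)).const_mul 2).sub
      ((hB1 0 h2).const_mul (2 * G θ)))
    convert (show HasDerivAt (fun δ => 2 * (G (θ + δ) * G1 (θ + δ)) - (2 * G θ) * G1 (θ + 2 * δ)) _ 0 from this) using 1
    simp only [add_zero, mul_zero]
    ring
  have hf'0 : f' 0 = 0 := by simp [hf'_def]
  -- limit of f' δ / (2 * δ)
  have hdiv2 : Filter.Tendsto (fun δ : ℝ => f' δ / (2 * δ)) (nhdsWithin 0 (Set.Ioi 0))
      (nhds (G1 θ ^ 2 - G θ * G2 θ)) := by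
    have hslope := hasDerivAt_iff_tendsto_slope.mp hc
    have hmono : nhdsWithin (0:ℝ) (Set.Ioi 0) ≤ nhdsWithin 0 {0}ᶜ :=
      nhdsWithin_mono 0 (fun x hx => ne_of_gt hx)
    have h2 := (hslope.mono_left hmono).div_const 2
    have : (2 * (G1 θ ^ 2 - G θ * G2 θ)) / 2 = G1 θ ^ 2 - G θ * G2 θ := by ring
    rw [this] at h2
    refine h2.congr' ?_
    filter_upwards [self_mem_nhdsWithin] with δ hδ
    rw [slope_def_field, hf'0, sub_zero, sub_zero, div_div, mul_comm δ 2]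
  -- l'Hôpital: limit of f δ / δ^2
  have hlh : Filter.Tendsto (fun δ : ℝ => f δ / δ ^ 2) (nhdsWithin 0 (Set.Ioi 0))
      (nhds (G1 θ ^ 2 - G θ * G2 θ)) := by
    apply HasDerivAt.lhopital_zero_nhdsGT (f' := f') (g' := fun δ => 2 * δ)
    · filter_upwards [self_mem_nhdsWithin] with δ hδ
      exact hf δ (by simp at hδ; linarith) (by simp at hδ; linarith)
    · filter_upwards [self_mem_nhdsWithin] with δ hδ
      simpa [mul_comm] using hasDerivAt_pow 2 δ
    · filter_upwards [self_mem_nhdsWithin] with δ hδ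
      have : (0:ℝ) < δ := hδ
      positivity
    · have hcont : ContinuousAt f 0 := (hf 0 (by linarith) (by linarith)).continuousAt
      have hf0 : f 0 = 0 := by
        simp only [hf_def, add_zero, mul_zero]
        ring
      have h := hcont.tendsto.mono_left (nhdsWithin_le_nhds (s := Set.Ioi 0))
      rwa [hf0] at h
    · have : Filter.Tendsto (fun δ : ℝ => δ ^ 2) (nhds 0) (nhds ((0:ℝ)^2)) :=
        (continuous_pow 2).continuousAt
      simpa using this.mono_left nhdsWithin_le_nhds
    · exact hdiv2
  -- limit of the prefactor
  set P : ℝ → ℝ := fun δ => G (δ + 1) ^ 2 * (θ ^ 2 * G θ) / (G (θ + 2 * δ) * G (θ + δ) ^ 2)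
    with hP_def
  have hPc : Filter.Tendsto P (nhdsWithin 0 (Set.Ioi 0))
      (nhds (θ ^ 2 / G θ ^ 2)) := by
    have c1 : ContinuousAt (fun δ : ℝ => G (δ + 1)) 0 := by
      show ContinuousAt (G ∘ fun δ : ℝ => δ + 1) 0
      refine ContinuousAt.comp ?_ (by fun_prop)
      simpa using (gamma_analyticOnNhd 1 (by norm_num)).continuousAt
    have c2 : ContinuousAt (fun δ : ℝ => G (θ + 2 * δ)) 0 := by
      show ContinuousAt (G ∘ fun δ : ℝ => θ + 2 * δ) 0
      refine ContinuousAt.comp ?_ (by fun_prop)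
      simpa using (gamma_analyticOnNhd θ hθ).continuousAt
    have c3 : ContinuousAt (fun δ : ℝ => G (θ + δ)) 0 := by
      show ContinuousAt (G ∘ fun δ : ℝ => θ + δ) 0
      refine ContinuousAt.comp ?_ (by fun_prop)
      simpa using (gamma_analyticOnNhd θ hθ).continuousAt
    have hne : G (θ + 2 * 0) * G (θ + 0) ^ 2 ≠ 0 := by
      have := hGpos (θ + 2 * 0) (by linarith)
      have := hGpos (θ + 0) (by linarith)
      positivity
    have hcP : ContinuousAt P 0 := ((c1.pow 2).mul continuousAt_const).div
      (c2.mul (c3.pow 2)) hne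
    have hP0 : P 0 = θ ^ 2 / G θ ^ 2 := by
      have hgθ : G θ ≠ 0 := (hGpos θ hθ).ne'
      simp only [hP_def, add_zero, mul_zero, zero_add, hG, Real.Gamma_one, one_pow, one_mul]
      rw [← hG]
      field_simp
    have h := hcP.tendsto.mono_left (nhdsWithin_le_nhds (s := Set.Ioi 0))
    rwa [hP0] at h
  -- combine
  have hmul := hPc.mul hlh
  have heq : ∀ᶠ δ in nhdsWithin (0:ℝ) (Set.Ioi 0),
      P δ * (f δ / δ ^ 2) = G δ ^ 2 *
        (θ * G (θ + 1) / G (θ + 2 * δ) - G (θ + 1) ^ 2 / G (θ + δ) ^ 2) := by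
    filter_upwards [self_mem_nhdsWithin] with δ hδ
    have hδ0 : (0:ℝ) < δ := hδ
    have hδne : δ ≠ 0 := ne_of_gt hδ0
    have hGδ : G δ = G (δ + 1) / δ := by
      rw [hG, Real.Gamma_add_one hδne]; field_simp
    have hGθ1 : G (θ + 1) = θ * G θ := Real.Gamma_add_one hθ.ne'
    have p1 : (0:ℝ) < G (θ + δ) := hGpos _ (by linarith)
    have p2 : (0:ℝ) < G (θ + 2 * δ) := hGpos _ (by linarith)
    rw [hGδ, hGθ1, hP_def, hf_def]
    have p2' : G (δ * 2 + θ) ≠ 0 := by rw [show δ * 2 + θ = θ + 2 * δ by ring]; exact p2.ne'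
    field_simp
    ring_nf
    linear_combination (-(G (1 + δ) ^ 2 * G θ ^ 2)) * mul_inv_cancel₀ p2'
  exact hmul.congr' heq
end

section
/- Let (X_i) be distributed according to the Poisson–Dirichlet distribution PD(θ) and V > 0 an independent random variable with law ρ. Then the k-th correlation function of the point process Σ_i δ_{V·X_i} is r_k(z_1,…,z_k) = (θ^k/(z_1⋯z_k)) ∫_{(|z|,∞)} (1 − |z|/v)^{θ−1} ρ(dv), where |z| = z_1 + ⋯ + z_k; in particular, z_1⋯z_k·r_k(z_1,…,z_k) = θ^k·g(z_1+⋯+z_k) for a function g independent of k. -/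
open MeasureTheory ENNReal

/-- `r` is the `k`-th correlation function of the point process
`Σ_i 1_{Y_i > 0} δ_{Y_i}` under `P`: for every nonnegative measurable `f`,
`E[Σ_{distinct tuples} f(Y_{i₁},…,Y_{i_k})]` equals the integral of `f·r` over
`(0,∞)^k` with respect to Lebesgue measure. -/
def IsCorrelationFn {Ω : Type*} [MeasurableSpace Ω] (P : Measure Ω)
    (Y : Ω → ℕ → ℝ) (k : ℕ) (r : (Fin k → ℝ) → ℝ) : Prop :=
  ∀ f : (Fin k → ℝ) → ℝ≥0∞, Measurable f →
    ∫⁻ ω, ∑' ι : Fin k ↪ ℕ,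
        (if ∀ j, 0 < Y ω (ι j) then f (fun j => Y ω (ι j)) else 0) ∂P
      = ∫⁻ x in {x : Fin k → ℝ | ∀ j, 0 < x j},
          f x * ENNReal.ofReal (r x) ∂(volume : Measure (Fin k → ℝ))


section PDAux

open Set


noncomputable def pdLint (θ : ℝ) (ρ : Measure ℝ) (s : ℝ) : ℝ≥0∞ :=
  ∫⁻ v in Set.Ioi s, ENNReal.ofReal ((1 - s / v) ^ (θ - 1)) ∂ρ

lemma measurable_pdKernel (θ : ℝ) : Measurable (fun p : ℝ × ℝ =>
    if p.1 < p.2 then ENNReal.ofReal ((1 - p.1 / p.2) ^ (θ - 1)) else 0) := by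
  refine Measurable.ite (measurableSet_lt measurable_fst measurable_snd) ?_ measurable_const
  exact ((measurable_const.sub (measurable_fst.div measurable_snd)).pow
    measurable_const).ennreal_ofReal

lemma pdLint_eq (θ : ℝ) (ρ : Measure ℝ) (s : ℝ) :
    pdLint θ ρ s = ∫⁻ v, (if s < v then ENNReal.ofReal ((1 - s / v) ^ (θ - 1)) else 0) ∂ρ := by
  rw [pdLint, ← lintegral_indicator measurableSet_Ioi]
  refine lintegral_congr fun v => ?_
  simp [Set.indicator_apply, Set.mem_Ioi]

lemma measurable_pdLint (θ : ℝ) (ρ : Measure ℝ) [SFinite ρ] : Measurable (pdLint θ ρ) := by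
  have h : pdLint θ ρ = fun s => ∫⁻ v,
      (if s < v then ENNReal.ofReal ((1 - s / v) ^ (θ - 1)) else 0) ∂ρ :=
    funext (pdLint_eq θ ρ)
  rw [h]
  exact (measurable_pdKernel θ).lintegral_prod_right'

lemma pdLint_finite (θ : ℝ) (hθ : 0 < θ) (ρ : Measure ℝ) [IsProbabilityMeasure ρ] (n : ℕ) :
    ∫⁻ s in Set.Ioo (0:ℝ) n, pdLint θ ρ s < ⊤ := by
  classical
  set G : ℝ → ℝ≥0∞ := fun t => if 0 < t ∧ t < 2 * (n:ℝ) then ENNReal.ofReal (t ^ (θ - 1)) else 0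
    with hG
  have hGmeas : Measurable G := by
    refine Measurable.ite ?_ ((measurable_id.pow measurable_const).ennreal_ofReal)
      measurable_const
    exact (measurableSet_lt measurable_const measurable_id).inter
      (measurableSet_lt measurable_id measurable_const)
  set J : ℝ≥0∞ := ∫⁻ t, G t with hJdef
  have hJfin : J < ⊤ := by
    have h1 : IntervalIntegrable (fun t : ℝ => t ^ (θ - 1)) volume 0 (2 * n) :=
      intervalIntegral.intervalIntegrable_rpow' (by linarith)
    have h2 : IntegrableOn (fun t : ℝ => t ^ (θ - 1)) (Set.Ioc 0 (2 * n)) volume := by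
      rwa [intervalIntegrable_iff_integrableOn_Ioc_of_le (by positivity)] at h1
    have hGind : J = ∫⁻ t in Set.Ioo (0:ℝ) (2 * n), ENNReal.ofReal (t ^ (θ - 1)) := by
      rw [hJdef, ← lintegral_indicator measurableSet_Ioo]
      refine lintegral_congr fun t => ?_
      simp [hG, Set.indicator_apply, Set.mem_Ioo]
    rw [hGind]
    calc ∫⁻ t in Set.Ioo (0:ℝ) (2 * n), ENNReal.ofReal (t ^ (θ - 1))
        ≤ ∫⁻ t in Set.Ioc (0:ℝ) (2 * n), ENNReal.ofReal (t ^ (θ - 1)) :=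
          lintegral_mono_set Set.Ioo_subset_Ioc_self
      _ ≤ ∫⁻ t in Set.Ioc (0:ℝ) (2 * n), (‖t ^ (θ - 1)‖₊ : ℝ≥0∞) :=
          lintegral_mono fun t => Real.ofReal_le_enorm _
      _ < ⊤ := h2.2
  set B : ℝ≥0∞ := ENNReal.ofReal n + (ENNReal.ofReal ((2 * (n:ℝ)) ^ (1 - θ)) * J
      + ENNReal.ofReal (2 ^ (1 - θ) * n)) with hB
  have hBfin : B < ⊤ := by
    refine ENNReal.add_lt_top.2 ⟨ofReal_lt_top, ENNReal.add_lt_top.2 ⟨?_, ofReal_lt_top⟩⟩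
    exact ENNReal.mul_lt_top ofReal_lt_top hJfin
  have hswap : ∫⁻ s in Set.Ioo (0:ℝ) n, pdLint θ ρ s
      = ∫⁻ v, ∫⁻ s in Set.Ioo (0:ℝ) n,
          (if s < v then ENNReal.ofReal ((1 - s / v) ^ (θ - 1)) else 0) ∂volume ∂ρ := by
    simp_rw [pdLint_eq]
    exact lintegral_lintegral_swap (measurable_pdKernel θ).aemeasurable
  rw [hswap]
  have hbound : ∀ v : ℝ, (∫⁻ s in Set.Ioo (0:ℝ) n,
      (if s < v then ENNReal.ofReal ((1 - s / v) ^ (θ - 1)) else 0) ∂volume) ≤ B := by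
    intro v
    rcases le_or_gt v 0 with hv | hv
    · have hz : ∀ s ∈ Set.Ioo (0:ℝ) n,
          (if s < v then ENNReal.ofReal ((1 - s / v) ^ (θ - 1)) else 0) = 0 := by
        intro s hs
        exact if_neg (not_lt.2 (hv.trans hs.1.le))
      rw [setLIntegral_congr_fun_ae measurableSet_Ioo (ae_of_all _ hz)]
      simp
    rcases le_or_gt 1 θ with hθ1 | hθ1
    · -- θ ≥ 1 : integrand ≤ 1
      calc ∫⁻ s in Set.Ioo (0:ℝ) n, (if s < v then ENNReal.ofReal ((1 - s / v) ^ (θ - 1)) else 0)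
          ≤ ∫⁻ _s in Set.Ioo (0:ℝ) n, 1 := by
            refine setLIntegral_mono' measurableSet_Ioo fun s hs => ?_
            split_ifs with h
            · refine ENNReal.ofReal_le_one.2 (Real.rpow_le_one ?_ ?_ (by linarith))
              · have : s / v ≤ 1 := (div_le_one hv).2 h.le
                linarith
              · have : 0 ≤ s / v := div_nonneg hs.1.le hv.le
                linarith
            · exact zero_le_one
        _ = ENNReal.ofReal n := by simp [Real.volume_Ioo]
        _ ≤ B := by rw [hB]; exact le_self_add
    · rcases le_or_gt v (2 * n) with hv2 | hv2
      · -- 0 < v ≤ 2n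
        have key : ∀ s ∈ Set.Ioo (0:ℝ) n,
            (if s < v then ENNReal.ofReal ((1 - s / v) ^ (θ - 1)) else 0)
              ≤ ENNReal.ofReal ((2 * (n:ℝ)) ^ (1 - θ)) * G (v - s) := by
          intro s hs
          split_ifs with h
          · have hvs : 0 < v - s := sub_pos.2 h
            have h2n : (0:ℝ) < 2 * n := lt_of_lt_of_le hv hv2
            have hval : (1 - s / v) ^ (θ - 1) = (v - s) ^ (θ - 1) * v ^ (1 - θ) := by
              have h1 : 1 - s / v = (v - s) / v := by field_simp
              rw [h1, Real.div_rpow hvs.le hv.le, div_eq_mul_inv, ← Real.rpow_neg hv.le,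
                neg_sub]
            have hle : (1 - s / v) ^ (θ - 1) ≤ (v - s) ^ (θ - 1) * (2 * n) ^ (1 - θ) := by
              rw [hval]
              exact mul_le_mul_of_nonneg_left
                (Real.rpow_le_rpow hv.le hv2 (by linarith)) (Real.rpow_nonneg hvs.le _)
            have hGval : G (v - s) = ENNReal.ofReal ((v - s) ^ (θ - 1)) := by
              rw [hG]
              exact if_pos ⟨hvs, by linarith [hs.1]⟩
            calc ENNReal.ofReal ((1 - s / v) ^ (θ - 1))
                ≤ ENNReal.ofReal ((v - s) ^ (θ - 1) * (2 * n) ^ (1 - θ)) :=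
                  ENNReal.ofReal_le_ofReal hle
              _ = ENNReal.ofReal ((2 * (n:ℝ)) ^ (1 - θ)) * G (v - s) := by
                  rw [hGval, ← ENNReal.ofReal_mul (Real.rpow_nonneg h2n.le _), mul_comm]
          · exact zero_le
        calc ∫⁻ s in Set.Ioo (0:ℝ) n, (if s < v then ENNReal.ofReal ((1 - s / v) ^ (θ - 1)) else 0)
            ≤ ∫⁻ s in Set.Ioo (0:ℝ) n, ENNReal.ofReal ((2 * (n:ℝ)) ^ (1 - θ)) * G (v - s) :=
              setLIntegral_mono' measurableSet_Ioo key
          _ ≤ ∫⁻ s, ENNReal.ofReal ((2 * (n:ℝ)) ^ (1 - θ)) * G (v - s) ∂volume :=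
              setLIntegral_le_lintegral _ _
          _ = ENNReal.ofReal ((2 * (n:ℝ)) ^ (1 - θ)) * ∫⁻ s, G (v - s) ∂volume :=
              lintegral_const_mul _ (hGmeas.comp (measurable_const.sub measurable_id))
          _ = ENNReal.ofReal ((2 * (n:ℝ)) ^ (1 - θ)) * J := by
              rw [(Measure.measurePreserving_sub_left volume v).lintegral_comp hGmeas]
          _ ≤ B := le_trans le_self_add le_add_self
      · -- v > 2n
        have key : ∀ s ∈ Set.Ioo (0:ℝ) n,
            (if s < v then ENNReal.ofReal ((1 - s / v) ^ (θ - 1)) else 0)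
              ≤ ENNReal.ofReal (2 ^ (1 - θ)) := by
          intro s hs
          split_ifs with h
          · have hhalf : (1:ℝ)/2 ≤ 1 - s / v := by
              have h1 : s / v < 1/2 := by
                rw [div_lt_iff₀ hv]
                nlinarith [hs.1, hs.2]
              linarith
            have hle : (1 - s / v) ^ (θ - 1) ≤ (2:ℝ) ^ (1 - θ) := by
              have := Real.rpow_le_rpow_of_nonpos (by norm_num : (0:ℝ) < 1/2) hhalf
                (by linarith : θ - 1 ≤ 0)
              calc (1 - s / v) ^ (θ - 1) ≤ ((1:ℝ)/2) ^ (θ - 1) := this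
                _ = (2:ℝ) ^ (1 - θ) := by
                    rw [show (1:ℝ)/2 = 2⁻¹ by norm_num,
                      Real.inv_rpow (by norm_num : (0:ℝ) ≤ 2), ← Real.rpow_neg
                      (by norm_num : (0:ℝ) ≤ 2), neg_sub]
            exact ENNReal.ofReal_le_ofReal hle
          · exact zero_le
        calc ∫⁻ s in Set.Ioo (0:ℝ) n, (if s < v then ENNReal.ofReal ((1 - s / v) ^ (θ - 1)) else 0)
            ≤ ∫⁻ _s in Set.Ioo (0:ℝ) n, ENNReal.ofReal (2 ^ (1 - θ)) :=
              setLIntegral_mono' measurableSet_Ioo key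
          _ = ENNReal.ofReal (2 ^ (1 - θ)) * ENNReal.ofReal n := by
              rw [setLIntegral_const, Real.volume_Ioo, sub_zero]
          _ = ENNReal.ofReal (2 ^ (1 - θ) * n) := by
              rw [← ENNReal.ofReal_mul (by positivity)]
          _ ≤ B := le_trans le_add_self le_add_self
  calc ∫⁻ v, _ ∂ρ ≤ ∫⁻ _v, B ∂ρ := lintegral_mono hbound
    _ = B := by simp
    _ < ⊤ := hBfin

lemma pdLint_bad_null (θ : ℝ) (hθ : 0 < θ) (ρ : Measure ℝ) [IsProbabilityMeasure ρ] :
    volume {s : ℝ | 0 < s ∧ pdLint θ ρ s = ⊤} = 0 := by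
  have hsub : {s : ℝ | 0 < s ∧ pdLint θ ρ s = ⊤}
      ⊆ ⋃ n : ℕ, {s : ℝ | pdLint θ ρ s = ⊤} ∩ Set.Ioo (0:ℝ) n := by
    intro s hs
    obtain ⟨n, hn⟩ := exists_nat_gt s
    exact Set.mem_iUnion.2 ⟨n, hs.2, hs.1, hn⟩
  refine measure_mono_null hsub (measure_iUnion_null fun n => ?_)
  have hae : ∀ᵐ s ∂(volume.restrict (Set.Ioo (0:ℝ) n)), pdLint θ ρ s < ⊤ :=
    ae_lt_top (measurable_pdLint θ ρ) (pdLint_finite θ hθ ρ n).ne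
  have h0 : (volume.restrict (Set.Ioo (0:ℝ) n)) {s : ℝ | pdLint θ ρ s = ⊤} = 0 := by
    rw [ae_iff] at hae
    simpa [lt_top_iff_ne_top] using hae
  rw [Measure.restrict_apply (show MeasurableSet {s : ℝ | pdLint θ ρ s = ⊤} from
    (measurable_pdLint θ ρ) (measurableSet_singleton ⊤))] at h0
  exact h0

lemma sum_preimage_null {m : ℕ} {N : Set ℝ} (hN : MeasurableSet N) (h0 : volume N = 0) :
    volume {w : Fin (m+1) → ℝ | (∑ j, w j) ∈ N} = 0 := by
  have mp := measurePreserving_piFinSuccAbove (fun _ : Fin (m+1) => (volume : Measure ℝ)) 0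
  set e := MeasurableEquiv.piFinSuccAbove (fun _ : Fin (m+1) => ℝ) 0 with he
  set S' : Set (ℝ × (Fin m → ℝ)) := {p | p.1 + ∑ j, p.2 j ∈ N} with hS'def
  have hsum : Measurable fun p : ℝ × (Fin m → ℝ) => p.1 + ∑ j, p.2 j :=
    measurable_fst.add (Finset.measurable_sum Finset.univ
      (fun j _ => (measurable_pi_apply j).comp measurable_snd))
  have hS' : MeasurableSet S' := hsum hN
  have key : {w : Fin (m+1) → ℝ | (∑ j, w j) ∈ N} = e ⁻¹' S' := by
    ext w
    have : (∑ j, w j) = w 0 + ∑ j : Fin m, w ((0 : Fin (m+1)).succAbove j) :=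
      Fin.sum_univ_succAbove w 0
    simp only [Set.mem_setOf_eq, Set.mem_preimage, he, hS'def,
      MeasurableEquiv.piFinSuccAbove_apply]
    rw [this]
    rfl
  have hvol : (volume : Measure (Fin (m+1) → ℝ)) = Measure.pi fun _ => volume := volume_pi
  rw [key, hvol, mp.measure_preimage hS'.nullMeasurableSet]
  rw [Measure.prod_apply_symm hS']
  have fib : ∀ y : Fin m → ℝ, (fun x : ℝ => (x, y)) ⁻¹' S' = (· + (∑ j, y j)) ⁻¹' N := by
    intro y; rfl
  simp only [fib]
  have : ∀ y : Fin m → ℝ, volume ((· + (∑ j, y j)) ⁻¹' N) = 0 := by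
    intro y
    rw [measure_preimage_add_right volume _ N]
    exact h0
  simp only [this, lintegral_zero]

lemma pdLint_ofReal (θ : ℝ) (ρ : Measure ℝ) {s : ℝ} (hs : 0 ≤ s)
    (hfin : pdLint θ ρ s ≠ ⊤) :
    ENNReal.ofReal (∫ v in Set.Ioi s, (1 - s / v) ^ (θ - 1) ∂ρ) = pdLint θ ρ s := by
  have hnn : ∀ v ∈ Set.Ioi s, 0 ≤ (1 - s / v) ^ (θ - 1) := by
    intro v hv
    have hv0 : 0 < v := lt_of_le_of_lt hs hv
    have : s / v ≤ 1 := (div_le_one hv0).2 (le_of_lt hv)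
    exact Real.rpow_nonneg (by linarith) _
  have hm : Measurable fun v : ℝ => (1 - s / v) ^ (θ - 1) :=
    (measurable_const.sub (measurable_const.div measurable_id)).pow measurable_const
  have hae : 0 ≤ᵐ[ρ.restrict (Set.Ioi s)] fun v => (1 - s / v) ^ (θ - 1) :=
    ae_restrict_of_forall_mem measurableSet_Ioi hnn
  have hint : Integrable (fun v : ℝ => (1 - s / v) ^ (θ - 1)) (ρ.restrict (Set.Ioi s)) := by
    refine ⟨hm.aestronglyMeasurable, ?_⟩
    have heq : ∫⁻ v in Set.Ioi s, (‖(1 - s / v) ^ (θ - 1)‖₊ : ℝ≥0∞) ∂ρ = pdLint θ ρ s :=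
      setLIntegral_congr_fun_ae measurableSet_Ioi
        (ae_of_all _ fun v hv => Real.enorm_eq_ofReal (hnn v hv))
    show ∫⁻ v, (‖(1 - s / v) ^ (θ - 1)‖₊ : ℝ≥0∞) ∂(ρ.restrict (Set.Ioi s)) < ⊤
    rw [heq]
    exact hfin.lt_top
  exact ofReal_integral_eq_lintegral_ofReal hint hae

lemma lintegral_scale {k : ℕ} {v : ℝ} (hv : 0 < v) (h : (Fin k → ℝ) → ℝ≥0∞)
    (hm : Measurable h) :
    ENNReal.ofReal (v ^ k) * ∫⁻ z, h z = ∫⁻ w, h (v⁻¹ • w) := by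
  have h1 : Measure.map (v⁻¹ • ·) (volume : Measure (Fin k → ℝ))
      = ENNReal.ofReal (v ^ k) • volume := by
    rw [Measure.map_addHaar_smul volume (inv_ne_zero hv.ne')]
    congr 1
    rw [Module.finrank_fin_fun ℝ]
    rw [inv_pow, inv_inv, abs_of_pos (pow_pos hv k)]
  calc ENNReal.ofReal (v ^ k) * ∫⁻ z, h z
      = ∫⁻ z, h z ∂(ENNReal.ofReal (v ^ k) • volume) := by rw [lintegral_smul_measure, smul_eq_mul]
    _ = ∫⁻ z, h z ∂(Measure.map (v⁻¹ • ·) volume) := by rw [h1]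
    _ = ∫⁻ w, h (v⁻¹ • w) := lintegral_map hm (measurable_const_smul _)

end PDAux

/-- Let `(X_i)` be PD(θ)-distributed (expressed through its known correlation functions)
and `V > 0` an independent random variable with law `ρ = P.map V`. Then the `k`-th
correlation function of `Σ_i δ_{V·X_i}` is
`r_k(z) = (θ^k/(z₁⋯z_k)) ∫_{(|z|,∞)} (1 − |z|/v)^{θ−1} ρ(dv)`; in particular
`z₁⋯z_k·r_k(z) = θ^k·g(z₁+⋯+z_k)` for a function `g` independent of `k`. -/
theorem lifted_PD_correlation
    {Ω : Type*} [MeasurableSpace Ω] (P : Measure Ω) [IsProbabilityMeasure P]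
    (θ : ℝ) (hθ : 0 < θ)
    (X : Ω → ℕ → ℝ) (V : Ω → ℝ)
    (hX : Measurable X) (hV : Measurable V) (hVpos : ∀ ω, 0 < V ω)
    (hindep : ProbabilityTheory.IndepFun X V P)
    (hPD : ∀ k : ℕ, IsCorrelationFn P X k (fun x =>
      if ∑ j, x j < 1 then θ ^ k / (∏ j, x j) * (1 - ∑ j, x j) ^ (θ - 1) else 0))
    (k : ℕ) :
    IsCorrelationFn P (fun ω i => V ω * X ω i) k (fun z =>
        θ ^ k / (∏ j, z j) *
          ∫ v in Set.Ioi (∑ j, z j), (1 - (∑ j, z j) / v) ^ (θ - 1) ∂(P.map V)) ∧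
    ∃ g : ℝ → ℝ, ∀ (k' : ℕ) (z : Fin k' → ℝ), (∀ j, 0 < z j) →
      (∏ j, z j) *
          (θ ^ k' / (∏ j, z j) *
            ∫ v in Set.Ioi (∑ j, z j), (1 - (∑ j, z j) / v) ^ (θ - 1) ∂(P.map V))
        = θ ^ k' * g (∑ j, z j) := by
  classical
  constructor
  · -- main part
    intro f hf
    set ρ : Measure ℝ := P.map V with hρdef
    haveI hρP : IsProbabilityMeasure ρ := Measure.isProbabilityMeasure_map hV.aemeasurable
    haveI hXP : IsProbabilityMeasure (P.map X) := Measure.isProbabilityMeasure_map hX.aemeasurable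
    have hposm : MeasurableSet {x : Fin k → ℝ | ∀ j, 0 < x j} := by
      rw [Set.setOf_forall]
      exact MeasurableSet.iInter fun j =>
        measurableSet_lt measurable_const (measurable_pi_apply j)
    haveI : Countable (Fin k ↪ ℕ) :=
      Function.Embedding.countable ⟨fun e => ⇑e, DFunLike.coe_injective⟩
    set G : (ℕ → ℝ) × ℝ → ℝ≥0∞ := fun p =>
      ∑' ι : Fin k ↪ ℕ, if ∀ j, 0 < p.1 (ι j) then f (fun j => p.2 * p.1 (ι j)) else 0
      with hGdef
    have hGmeas : Measurable G := by
      refine Measurable.ennreal_tsum fun ι => ?_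
      refine Measurable.ite ?_ ?_ measurable_const
      · rw [Set.setOf_forall]
        exact MeasurableSet.iInter fun j =>
          measurableSet_lt measurable_const (measurable_fst.eval)
      · exact hf.comp (measurable_pi_lambda _ fun j =>
          measurable_snd.mul (measurable_fst.eval))
    -- Step 1: rewrite LHS through G
    have step1 : ∫⁻ ω, ∑' ι : Fin k ↪ ℕ,
        (if ∀ j, 0 < (fun ω i => V ω * X ω i) ω (ι j)
          then f (fun j => (fun ω i => V ω * X ω i) ω (ι j)) else 0) ∂P
        = ∫⁻ ω, G (X ω, V ω) ∂P := by
      refine lintegral_congr fun ω => tsum_congr fun ι => ?_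
      have hcond : (∀ j, 0 < V ω * X ω (ι j)) ↔ (∀ j, 0 < X ω (ι j)) :=
        forall_congr' fun j => mul_pos_iff_of_pos_left (hVpos ω)
      simp only [hGdef]
      rw [if_congr hcond rfl rfl]
    -- Step 2-3: independence and product structure
    have hmap : P.map (fun ω => (X ω, V ω)) = (P.map X).prod ρ :=
      (ProbabilityTheory.indepFun_iff_map_prod_eq_prod_map_map
        hX.aemeasurable hV.aemeasurable).mp hindep
    have step2 : ∫⁻ ω, G (X ω, V ω) ∂P
        = ∫⁻ v, ∫⁻ x, G (x, v) ∂(P.map X) ∂ρ := by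
      rw [← lintegral_map hGmeas (hX.prodMk hV), hmap]
      exact lintegral_prod_symm G hGmeas.aemeasurable
    -- Step 4: apply the PD correlation hypothesis for each fixed v
    have step4 : ∀ v : ℝ, ∫⁻ x, G (x, v) ∂(P.map X)
        = ∫⁻ z in {x : Fin k → ℝ | ∀ j, 0 < x j},
            f (fun j => v * z j) * ENNReal.ofReal
              (if ∑ j, z j < 1 then θ ^ k / (∏ j, z j) * (1 - ∑ j, z j) ^ (θ - 1) else 0)
            ∂volume := by
      intro v
      have hfv : Measurable (fun z : Fin k → ℝ => f (fun j => v * z j)) :=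
        hf.comp (measurable_pi_lambda _ fun j => measurable_const.mul (measurable_pi_apply j))
      have hGv : Measurable fun x : ℕ → ℝ => G (x, v) :=
        hGmeas.comp (measurable_id.prodMk measurable_const)
      rw [lintegral_map hGv hX]
      exact hPD k _ hfv
    -- the scaled integrand
    set W : ℝ → (Fin k → ℝ) → ℝ≥0∞ := fun v w =>
      if ∀ j, 0 < w j then f w * (if (∑ j, w j) < v then
        ENNReal.ofReal (θ ^ k / (∏ j, w j) * (1 - (∑ j, w j) / v) ^ (θ - 1)) else 0) else 0
      with hWdef
    have hWjoint : Measurable (Function.uncurry W) := by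
      refine Measurable.ite ?_ (Measurable.mul ?_ ?_) measurable_const
      · rw [Set.setOf_forall]
        exact MeasurableSet.iInter fun j =>
          measurableSet_lt measurable_const (measurable_snd.eval)
      · exact hf.comp measurable_snd
      · refine Measurable.ite ?_ ?_ measurable_const
        · exact measurableSet_lt
            (Finset.measurable_sum Finset.univ fun j _ =>
              measurable_snd.eval (a := j)) measurable_fst
        · refine Measurable.ennreal_ofReal ?_
          refine Measurable.mul ?_ ?_
          · exact measurable_const.div
              (Finset.measurable_prod Finset.univ fun j _ =>
                measurable_snd.eval (a := j))
          · exact (measurable_const.sub ((Finset.measurable_sum Finset.univ fun j _ =>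
              measurable_snd.eval (a := j)).div measurable_fst)).pow
              measurable_const
    -- Step 5: scaling change of variables, for each v > 0
    have step5 : ∀ v : ℝ, 0 < v →
        (∫⁻ z in {x : Fin k → ℝ | ∀ j, 0 < x j},
            f (fun j => v * z j) * ENNReal.ofReal
              (if ∑ j, z j < 1 then θ ^ k / (∏ j, z j) * (1 - ∑ j, z j) ^ (θ - 1) else 0)
            ∂volume)
          = ∫⁻ w, W v w ∂volume := by
      intro v hv
      set H : (Fin k → ℝ) → ℝ≥0∞ := fun z =>
        if ∀ j, 0 < z j then f (fun j => v * z j) * ENNReal.ofReal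
          (if ∑ j, z j < 1 then θ ^ k / (∏ j, z j) * (1 - ∑ j, z j) ^ (θ - 1) else 0) else 0
        with hHdef
      have hfv : Measurable (fun z : Fin k → ℝ => f (fun j => v * z j)) :=
        hf.comp (measurable_pi_lambda _ fun j => measurable_const.mul (measurable_pi_apply j))
      have hHmeas : Measurable H := by
        refine Measurable.ite hposm (hfv.mul (Measurable.ennreal_ofReal ?_)) measurable_const
        refine Measurable.ite (measurableSet_lt
          (Finset.measurable_sum Finset.univ fun j _ => measurable_pi_apply j)
          measurable_const) ?_ measurable_const
        exact (measurable_const.div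
          (Finset.measurable_prod Finset.univ fun j _ => measurable_pi_apply j)).mul
          ((measurable_const.sub
            (Finset.measurable_sum Finset.univ fun j _ => measurable_pi_apply j)).pow
            measurable_const)
      have hWm : Measurable (W v) := hWjoint.comp (measurable_const.prodMk measurable_id)
      have hrestr : (∫⁻ z in {x : Fin k → ℝ | ∀ j, 0 < x j},
          f (fun j => v * z j) * ENNReal.ofReal
            (if ∑ j, z j < 1 then θ ^ k / (∏ j, z j) * (1 - ∑ j, z j) ^ (θ - 1) else 0)
          ∂volume) = ∫⁻ z, H z ∂volume := by
        rw [← lintegral_indicator hposm]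
        refine lintegral_congr fun z => ?_
        simp only [hHdef, Set.indicator_apply, Set.mem_setOf_eq]
      have hpt : ∀ w : Fin k → ℝ, H (v⁻¹ • w) = ENNReal.ofReal (v ^ k) * W v w := by
        intro w
        by_cases hw : ∀ j, 0 < w j
        · have hw' : ∀ j, 0 < (v⁻¹ • w) j := fun j => mul_pos (inv_pos.2 hv) (hw j)
          have harg : (fun j => v * (v⁻¹ • w) j) = w := by
            funext j
            show v * (v⁻¹ * w j) = w j
            rw [mul_inv_cancel_left₀ hv.ne']
          have hsum : (∑ j, (v⁻¹ • w) j) = v⁻¹ * ∑ j, w j := by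
            simp only [Pi.smul_apply, smul_eq_mul]
            rw [Finset.mul_sum]
          have hprodpos : (0:ℝ) < ∏ j, w j := Finset.prod_pos fun j _ => hw j
          have hprodeq : (∏ j, (v⁻¹ • w) j) = (v⁻¹) ^ k * ∏ j, w j := by
            simp only [Pi.smul_apply, smul_eq_mul]
            rw [Finset.prod_mul_distrib, Finset.prod_const, Finset.card_univ, Fintype.card_fin]
          have hiff : ((∑ j, (v⁻¹ • w) j) < 1) ↔ ((∑ j, w j) < v) := by
            rw [hsum, inv_mul_eq_div, div_lt_one hv]
          rw [hHdef, hWdef]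
          simp only [if_pos hw', if_pos hw, harg]
          by_cases hS : (∑ j, w j) < v
          · rw [if_pos (hiff.2 hS), if_pos hS]
            have hreal : θ ^ k / (∏ j, (v⁻¹ • w) j) * (1 - ∑ j, (v⁻¹ • w) j) ^ (θ - 1)
                = v ^ k * (θ ^ k / (∏ j, w j) * (1 - (∑ j, w j) / v) ^ (θ - 1)) := by
              rw [hprodeq, hsum, inv_mul_eq_div]
              have h1 : v ≠ 0 := hv.ne'
              have h2 : (∏ j, w j) ≠ 0 := hprodpos.ne'
              field_simp
              rw [mul_comm _ (v ^ k), ← mul_assoc, ← mul_pow, mul_one_div_cancel h1, one_pow, one_mul]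
            rw [hreal, ENNReal.ofReal_mul (by positivity)]
            ring
          · rw [if_neg (fun h => hS (hiff.1 h)), if_neg hS]
            simp
        · have hw' : ¬ ∀ j, 0 < (v⁻¹ • w) j := by
            intro hc
            apply hw
            intro j
            have h1 := mul_pos hv (hc j)
            have h2 : v * (v⁻¹ • w) j = w j := by
              show v * (v⁻¹ * w j) = w j
              rw [mul_inv_cancel_left₀ hv.ne']
            rwa [h2] at h1
          rw [hHdef, hWdef]
          simp only [if_neg hw, if_neg hw', mul_zero]
      have hscale := lintegral_scale hv H hHmeas
      have hRHS : ∫⁻ w, H (v⁻¹ • w) ∂volume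
          = ENNReal.ofReal (v ^ k) * ∫⁻ w, W v w ∂volume := by
        simp_rw [hpt]
        exact lintegral_const_mul _ hWm
      rw [hRHS] at hscale
      have hne0 : ENNReal.ofReal (v ^ k) ≠ 0 :=
        (ENNReal.ofReal_pos.2 (pow_pos hv k)).ne'
      have := (ENNReal.mul_right_inj hne0 ENNReal.ofReal_ne_top).1 hscale
      rw [hrestr]
      exact this
    -- Step 6: combine over a.e. v
    have hv_ae : ∀ᵐ v ∂ρ, 0 < v := by
      rw [hρdef]
      exact (MeasureTheory.ae_map_iff hV.aemeasurable measurableSet_Ioi).2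
        (Filter.Eventually.of_forall hVpos)
    have step6 : ∫⁻ v, ∫⁻ x, G (x, v) ∂(P.map X) ∂ρ
        = ∫⁻ v, ∫⁻ w, W v w ∂volume ∂ρ := by
      refine lintegral_congr_ae ?_
      filter_upwards [hv_ae] with v hv
      rw [step4 v, step5 v hv]
    -- Step 7: Tonelli
    have step7 : ∫⁻ v, ∫⁻ w, W v w ∂volume ∂ρ = ∫⁻ w, ∫⁻ v, W v w ∂ρ ∂volume :=
      lintegral_lintegral_swap hWjoint.aemeasurable
    -- Step 8: compute the inner integral
    have step8 : ∀ w : Fin k → ℝ, ∫⁻ v, W v w ∂ρ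
        = if ∀ j, 0 < w j then
            f w * (ENNReal.ofReal (θ ^ k / (∏ j, w j)) * pdLint θ ρ (∑ j, w j)) else 0 := by
      intro w
      by_cases hw : ∀ j, 0 < w j
      · simp only [hWdef, if_pos hw]
        have hprodpos : (0:ℝ) < ∏ j, w j := Finset.prod_pos fun j _ => hw j
        have ha : (0:ℝ) ≤ θ ^ k / ∏ j, w j := by positivity
        have hKm : Measurable fun v : ℝ =>
            (if (∑ j, w j) < v then
              ENNReal.ofReal ((1 - (∑ j, w j) / v) ^ (θ - 1)) else 0) :=
          (measurable_pdKernel θ).comp (measurable_const.prodMk measurable_id)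
        have hsplit : ∀ v : ℝ,
            f w * (if (∑ j, w j) < v then
              ENNReal.ofReal (θ ^ k / (∏ j, w j) * (1 - (∑ j, w j) / v) ^ (θ - 1)) else 0)
            = (f w * ENNReal.ofReal (θ ^ k / (∏ j, w j))) *
              (if (∑ j, w j) < v then
                ENNReal.ofReal ((1 - (∑ j, w j) / v) ^ (θ - 1)) else 0) := by
          intro v
          split_ifs with h
          · rw [ENNReal.ofReal_mul ha, mul_assoc]
          · simp
        simp_rw [hsplit]
        rw [lintegral_const_mul _ hKm, ← pdLint_eq θ ρ, mul_assoc]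
      · simp only [hWdef, if_neg hw]
        exact lintegral_zero
    -- Step 9: a.e. finiteness allows replacing pdLint by the Bochner integral
    have hgood : ∀ᵐ w : Fin k → ℝ ∂volume,
        (∀ j, 0 < w j) → pdLint θ ρ (∑ j, w j) ≠ ⊤ := by
      cases k with
      | zero =>
        refine Filter.Eventually.of_forall fun w _ => ?_
        have hz : (∑ j : Fin 0, w j) = 0 := by simp
        rw [hz]
        have hval : pdLint θ ρ 0 = ρ (Set.Ioi 0) := by
          simp [pdLint, zero_div, Real.one_rpow]
        rw [hval]
        exact measure_ne_top ρ _
      | succ m =>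
        have hbadm : MeasurableSet {s : ℝ | 0 < s ∧ pdLint θ ρ s = ⊤} := by
          refine MeasurableSet.inter ?_ ?_
          · exact measurableSet_lt measurable_const measurable_id
          · exact (measurable_pdLint θ ρ) (measurableSet_singleton ⊤)
        have hnull := sum_preimage_null (m := m) hbadm (pdLint_bad_null θ hθ ρ)
        have hae : ∀ᵐ w : Fin (m+1) → ℝ ∂volume,
            (∑ j, w j) ∉ {s : ℝ | 0 < s ∧ pdLint θ ρ s = ⊤} := by
          rw [ae_iff]
          simpa using hnull
        filter_upwards [hae] with w hwmem hw
        have hpos : 0 < ∑ j, w j := Finset.sum_pos (fun j _ => hw j) Finset.univ_nonempty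
        exact fun htop => hwmem ⟨hpos, htop⟩
    have step9 : ∫⁻ w, (if ∀ j, 0 < w j then
          f w * (ENNReal.ofReal (θ ^ k / (∏ j, w j)) * pdLint θ ρ (∑ j, w j)) else 0) ∂volume
        = ∫⁻ w, (if ∀ j, 0 < w j then
            f w * ENNReal.ofReal (θ ^ k / (∏ j, w j) *
              ∫ u in Set.Ioi (∑ j, w j), (1 - (∑ j, w j) / u) ^ (θ - 1) ∂ρ) else 0) ∂volume := by
      refine lintegral_congr_ae ?_
      filter_upwards [hgood] with w hgw
      by_cases hw : ∀ j, 0 < w j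
      · rw [if_pos hw, if_pos hw]
        have hprodpos : (0:ℝ) < ∏ j, w j := Finset.prod_pos fun j _ => hw j
        have ha : (0:ℝ) ≤ θ ^ k / ∏ j, w j := by positivity
        rw [← pdLint_ofReal θ ρ (Finset.sum_nonneg fun j _ => (hw j).le) (hgw hw),
          ← ENNReal.ofReal_mul ha]
      · rw [if_neg hw, if_neg hw]
    calc ∫⁻ ω, ∑' ι : Fin k ↪ ℕ,
        (if ∀ j, 0 < (fun ω i => V ω * X ω i) ω (ι j)
          then f (fun j => (fun ω i => V ω * X ω i) ω (ι j)) else 0) ∂P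
        = ∫⁻ ω, G (X ω, V ω) ∂P := step1
      _ = ∫⁻ v, ∫⁻ x, G (x, v) ∂(P.map X) ∂ρ := step2
      _ = ∫⁻ v, ∫⁻ w, W v w ∂volume ∂ρ := step6
      _ = ∫⁻ w, ∫⁻ v, W v w ∂ρ ∂volume := step7
      _ = ∫⁻ w, (if ∀ j, 0 < w j then
            f w * (ENNReal.ofReal (θ ^ k / (∏ j, w j)) * pdLint θ ρ (∑ j, w j)) else 0)
            ∂volume := lintegral_congr step8
      _ = ∫⁻ w, (if ∀ j, 0 < w j then
            f w * ENNReal.ofReal (θ ^ k / (∏ j, w j) *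
              ∫ u in Set.Ioi (∑ j, w j), (1 - (∑ j, w j) / u) ^ (θ - 1) ∂ρ) else 0)
            ∂volume := step9
      _ = ∫⁻ x in {x : Fin k → ℝ | ∀ j, 0 < x j},
            f x * ENNReal.ofReal (θ ^ k / (∏ j, x j) *
              ∫ v in Set.Ioi (∑ j, x j), (1 - (∑ j, x j) / v) ^ (θ - 1) ∂ρ) ∂volume := by
          rw [← lintegral_indicator hposm]
          refine lintegral_congr fun w => ?_
          simp only [Set.indicator_apply, Set.mem_setOf_eq]
  · -- second part
    refine ⟨fun s => ∫ v in Set.Ioi s, (1 - s / v) ^ (θ - 1) ∂(P.map V), fun k' z hz => ?_⟩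
    have hprod : (0:ℝ) < ∏ j, z j := Finset.prod_pos fun j _ => hz j
    field_simp
end

section
/- If V has the gamma density ρ_{θ,b}(v) = Γ(θ)^{-1} b^θ v^{θ−1} e^{−bv} on (0,∞), then for every k ≥ 1 and z_1,…,z_k > 0, (θ^k/(z_1⋯z_k)) ∫_{|z|}^∞ ρ_{θ,b}(v)(1 − |z|/v)^{θ−1} dv = Π_{i=1}^k (θ/z_i)·e^{−b z_i}, where |z| = z_1+⋯+z_k. Hence the lifted PD(θ) process with gamma scaling is a Poisson point process with mean density θ y^{−1} e^{−by}. -/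
open MeasureTheory

/-- For gamma scaling `ρ_{θ,b}(v) = Γ(θ)⁻¹ b^θ v^{θ−1} e^{−bv}`:
`(θ^k/(z₁⋯z_k)) ∫_{|z|}^∞ ρ_{θ,b}(v)(1 − |z|/v)^{θ−1} dv = Π_i (θ/z_i)·e^{−b z_i}`,
i.e. the correlation functions of the lifted PD(θ) process with gamma scaling are
those of a Poisson point process with mean density `θ y⁻¹ e^{−by}`. -/
theorem gamma_lifted_PD_is_poisson (θ b : ℝ) (hθ : 0 < θ) (hb : 0 < b)
    (k : ℕ) (hk : 1 ≤ k) (z : Fin k → ℝ) (hz : ∀ j, 0 < z j) :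
    θ ^ k / (∏ j, z j) *
        ∫ v in Set.Ioi (∑ j, z j),
          (Real.Gamma θ)⁻¹ * b ^ θ * v ^ (θ - 1) * Real.exp (-b * v) *
            (1 - (∑ j, z j) / v) ^ (θ - 1)
      = ∏ j, (θ / z j * Real.exp (-b * z j)) := by
  set s : ℝ := ∑ j, z j with hs_def
  have hs : 0 < s := Finset.sum_pos (fun j _ => hz j) (Finset.univ_nonempty_iff.2
    (by exact ⟨⟨0, hk⟩⟩))
  -- Step 1: shift the integral
  have hshift :
      (∫ v in Set.Ioi s,
          (Real.Gamma θ)⁻¹ * b ^ θ * v ^ (θ - 1) * Real.exp (-b * v) *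
            (1 - s / v) ^ (θ - 1))
        = ∫ w in Set.Ioi (0 : ℝ),
            (Real.Gamma θ)⁻¹ * b ^ θ * (w + s) ^ (θ - 1) * Real.exp (-b * (w + s)) *
              (1 - s / (w + s)) ^ (θ - 1) := by
    rw [← (measurePreserving_add_right volume s).setIntegral_preimage_emb
      (measurableEmbedding_addRight s)
      (fun v => (Real.Gamma θ)⁻¹ * b ^ θ * v ^ (θ - 1) * Real.exp (-b * v) *
        (1 - s / v) ^ (θ - 1)) (Set.Ioi s)]
    congr 1
    ext w
    simp [Set.mem_preimage, lt_add_iff_pos_left]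
  -- Step 2: simplify the shifted integrand
  have hcongr :
      (∫ w in Set.Ioi (0 : ℝ),
          (Real.Gamma θ)⁻¹ * b ^ θ * (w + s) ^ (θ - 1) * Real.exp (-b * (w + s)) *
            (1 - s / (w + s)) ^ (θ - 1))
        = ∫ w in Set.Ioi (0 : ℝ),
            ((Real.Gamma θ)⁻¹ * b ^ θ * Real.exp (-b * s)) *
              (w ^ (θ - 1) * Real.exp (-(b * w))) := by
    refine setIntegral_congr_fun measurableSet_Ioi (fun w hw => ?_)
    have hw0 : 0 < w := hw
    have hws : 0 < w + s := by linarith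
    have h1 : (0:ℝ) ≤ 1 - s / (w + s) := by
      rw [sub_nonneg, div_le_one hws]; linarith
    have key : (w + s) ^ (θ - 1) * (1 - s / (w + s)) ^ (θ - 1) = w ^ (θ - 1) := by
      rw [← Real.mul_rpow hws.le h1]
      congr 1
      field_simp
      ring
    have hexp : Real.exp (-b * (w + s)) = Real.exp (-(b * w)) * Real.exp (-b * s) := by
      rw [← Real.exp_add]; ring_nf
    calc (Real.Gamma θ)⁻¹ * b ^ θ * (w + s) ^ (θ - 1) * Real.exp (-b * (w + s)) *
            (1 - s / (w + s)) ^ (θ - 1)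
        = (Real.Gamma θ)⁻¹ * b ^ θ *
            ((w + s) ^ (θ - 1) * (1 - s / (w + s)) ^ (θ - 1)) *
            (Real.exp (-(b * w)) * Real.exp (-b * s)) := by rw [hexp]; ring
      _ = ((Real.Gamma θ)⁻¹ * b ^ θ * Real.exp (-b * s)) *
            (w ^ (θ - 1) * Real.exp (-(b * w))) := by rw [key]; ring
  -- Step 3: evaluate
  have hGamma : (∫ w in Set.Ioi (0 : ℝ), w ^ (θ - 1) * Real.exp (-(b * w)))
      = (1 / b) ^ θ * Real.Gamma θ := Real.integral_rpow_mul_exp_neg_mul_Ioi hθ hb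
  have hval :
      (∫ v in Set.Ioi s,
          (Real.Gamma θ)⁻¹ * b ^ θ * v ^ (θ - 1) * Real.exp (-b * v) *
            (1 - s / v) ^ (θ - 1)) = Real.exp (-b * s) := by
    rw [hshift, hcongr, integral_const_mul, hGamma]
    have hbθ : b ^ θ ≠ 0 := (Real.rpow_pos_of_pos hb θ).ne'
    have hG : Real.Gamma θ ≠ 0 := (Real.Gamma_pos_of_pos hθ).ne'
    rw [one_div, Real.inv_rpow hb.le]
    field_simp
  rw [hval]
  -- Step 4: the product identity
  have : ∏ j, (θ / z j * Real.exp (-b * z j))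
      = (∏ j, θ / z j) * ∏ j, Real.exp (-b * z j) := Finset.prod_mul_distrib
  rw [this, ← Real.exp_sum]
  have h1 : ∏ j, θ / z j = θ ^ k / ∏ j, z j := by
    rw [Finset.prod_div_distrib, Finset.prod_const, Finset.card_univ, Fintype.card_fin]
  have h2 : ∑ j, -b * z j = -b * s := by
    rw [hs_def, Finset.mul_sum]
  rw [h1, h2]
end
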